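/- For n ≥ 2 and 1 ≤ i ≤ n-1, the number of permutations π of [n] such that i is an ascent and i+1 is a descent equals (i-1)(n-2)! + (n-i)(n-2)! + (n-i)(i-1)(n-2)!. -/

import Mathlib

open Finset

/-- The word of a permutation of `[n]` in one-line notation (positions `0,…,n-1`
give values `1,…,n`), with the convention that position `n` carries the value `n+1`. -/
def pval (n : ℕ) (π : Equiv.Perm (Fin n)) (t : ℕ) : ℕ :=
  if h : t < n then (π ⟨t, h⟩ : ℕ) + 1 else n + 1

/-- The value `i` is an ascent of `π`. -/
def IsValAscent (n : ℕ) (π : Equiv.Perm (Fin n)) (i : ℕ) : Prop :=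
  ∃ t < n, pval n π t = i ∧ pval n π t < pval n π (t + 1)

/-- The value `i` is a descent of `π`. -/
def IsValDescent (n : ℕ) (π : Equiv.Perm (Fin n)) (i : ℕ) : Prop :=
  ∃ t < n, pval n π t = i ∧ pval n π t > pval n π (t + 1)


open List

namespace ValAux

def Adj (p q : ℕ) (L : List ℕ) : Prop := [p, q] <:+: L

lemma adj_iff {p q : ℕ} {L : List ℕ} : Adj p q L ↔ ∃ A B, L = A ++ p :: q :: B := by
  constructor
  · rintro ⟨A, B, rfl⟩; exact ⟨A, B, by simp⟩
  · rintro ⟨A, B, rfl⟩; exact ⟨A, B, by simp⟩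

lemma ends_iff {z : ℕ} {L : List ℕ} : [z] <:+ L ↔ ∃ A, L = A ++ [z] := by
  constructor
  · rintro ⟨A, rfl⟩; exact ⟨A, rfl⟩
  · rintro ⟨A, rfl⟩; exact ⟨A, rfl⟩

lemma notmem_of_nodup_split {L A B : List ℕ} {p : ℕ} (h : L.Nodup) (h1 : L = A ++ p :: B) :
    p ∉ A ∧ p ∉ B := by
  subst h1
  rw [List.nodup_append] at h
  refine ⟨fun hm => h.2.2 p hm p List.mem_cons_self rfl, fun hm => ?_⟩
  exact (List.nodup_cons.1 h.2.1).1 hm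

lemma split_unique {L A B A' B' : List ℕ} {p : ℕ} (h : L.Nodup)
    (h1 : L = A ++ p :: B) (h2 : L = A' ++ p :: B') : A = A' ∧ B = B' := by
  have hpA : p ∉ A := (notmem_of_nodup_split h h1).1
  have hpA' : p ∉ A' := (notmem_of_nodup_split h h2).1
  have he : A ++ p :: B = A' ++ p :: B' := h1.symm.trans h2
  rcases List.append_eq_append_iff.1 he with ⟨E, hA', hE⟩ | ⟨E, hA, hE⟩
  · cases E with
    | nil => simp at hA' hE; exact ⟨hA'.symm, hE⟩
    | cons e E' =>
      rw [List.cons_append] at hE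
      obtain ⟨rfl, -⟩ := List.cons_eq_cons.1 hE
      exact absurd (by simp [hA'] : p ∈ A') hpA'
  · cases E with
    | nil => simp at hA hE; exact ⟨hA, hE.symm⟩
    | cons e E' =>
      rw [List.cons_append] at hE
      obtain ⟨rfl, -⟩ := List.cons_eq_cons.1 hE
      exact absurd (by simp [hA] : p ∈ A) hpA

lemma adj_succ_unique {L : List ℕ} {p q q' : ℕ} (h : L.Nodup)
    (h1 : Adj p q L) (h2 : Adj p q' L) : q = q' := by
  obtain ⟨A, B, rfl⟩ := adj_iff.1 h1
  obtain ⟨A', B', hL⟩ := adj_iff.1 h2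
  have hs := (split_unique h rfl hL).2
  exact (List.cons_eq_cons.1 hs).1

lemma adj_pred_unique {L : List ℕ} {p p' q : ℕ} (h : L.Nodup)
    (h1 : Adj p q L) (h2 : Adj p' q L) : p = p' := by
  obtain ⟨A, B, rfl⟩ := adj_iff.1 h1
  obtain ⟨A', B', hL⟩ := adj_iff.1 h2
  have h1' : A ++ p :: q :: B = (A ++ [p]) ++ q :: B := by simp
  have h2' : A ++ p :: q :: B = (A' ++ [p']) ++ q :: B' := by simpa using hL
  have hs := (split_unique h h1' h2').1
  have := congrArg List.getLast? hs
  simpa [List.getLast?_concat] using this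

lemma adj_swap_false {L : List ℕ} {p q : ℕ} (h : L.Nodup)
    (h1 : Adj p q L) (h2 : Adj q p L) : False := by
  obtain ⟨A, B, rfl⟩ := adj_iff.1 h1
  obtain ⟨C, D, hL⟩ := adj_iff.1 h2
  have e1 : A ++ p :: q :: B = A ++ p :: (q :: B) := rfl
  have e2 : A ++ p :: q :: B = (C ++ [q]) ++ p :: D := by simpa using hL
  have hsp := split_unique h e1 e2
  have e3 : A ++ p :: q :: B = (A ++ [p]) ++ q :: B := by simp
  have e4 : A ++ p :: q :: B = C ++ q :: (p :: D) := by simpa using hL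
  have hsq := split_unique h e3 e4
  have hA : A = C ++ [q] := hsp.1
  have hC : A ++ [p] = C := hsq.1
  rw [← hC] at hA
  have := congrArg List.length hA
  simp at this

lemma adj_mem_left {L : List ℕ} {p q : ℕ} (h : Adj p q L) : p ∈ L := by
  obtain ⟨A, B, rfl⟩ := adj_iff.1 h; simp

lemma adj_mem_right {L : List ℕ} {p q : ℕ} (h : Adj p q L) : q ∈ L := by
  obtain ⟨A, B, rfl⟩ := adj_iff.1 h; simp

lemma erase_adj {L : List ℕ} {p q y : ℕ} (hyp : y ≠ p) (hyq : y ≠ q) (h : Adj p q L) :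
    Adj p q (L.erase y) := by
  obtain ⟨A, B, rfl⟩ := adj_iff.1 h
  by_cases hy : y ∈ A
  · rw [List.erase_append_left _ hy]
    exact adj_iff.2 ⟨A.erase y, B, rfl⟩
  · rw [List.erase_append_right _ hy, List.erase_cons_tail (by simp [Ne.symm hyp]),
      List.erase_cons_tail (by simp [Ne.symm hyq])]
    exact adj_iff.2 ⟨A, B.erase y, rfl⟩

lemma erase_adj_rev {L : List ℕ} {p q y : ℕ} (hnd : L.Nodup) (hyp : y ≠ p) (hyq : y ≠ q)
    (h : Adj p q (L.erase y)) : Adj p q L ∨ (Adj p y L ∧ Adj y q L) := by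
  by_cases hy : y ∈ L
  · obtain ⟨A, B, rfl⟩ := List.append_of_mem hy
    have hyA : y ∉ A := (notmem_of_nodup_split hnd rfl).1
    rw [List.erase_append_right _ hyA, List.erase_cons_head] at h
    obtain ⟨C, D, hCD⟩ := adj_iff.1 h
    rcases List.append_eq_append_iff.1 hCD with ⟨E, hC, hB⟩ | ⟨E, hA, hE⟩
    · subst hB
      exact Or.inl (adj_iff.2 ⟨A ++ y :: E, D, by simp⟩)
    · cases E with
      | nil =>
        simp only [List.nil_append] at hE
        exact Or.inl (adj_iff.2 ⟨A ++ [y], D, by simp [← hE]⟩)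
      | cons e E' =>
        rw [List.cons_append] at hE
        obtain ⟨rfl, hE'⟩ := List.cons_eq_cons.1 hE
        cases E' with
        | nil =>
          simp only [List.nil_append] at hE'
          refine Or.inr ⟨adj_iff.2 ⟨C, B, by simp [hA]⟩,
            adj_iff.2 ⟨C ++ [p], D, by simp [hA, ← hE']⟩⟩
        | cons e' E'' =>
          rw [List.cons_append] at hE'
          obtain ⟨rfl, hE''⟩ := List.cons_eq_cons.1 hE'
          exact Or.inl (adj_iff.2 ⟨C, E'' ++ y :: B, by simp [hA, hE'']⟩)
  · rw [List.erase_of_not_mem hy] at h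
    exact Or.inl h

lemma ends_erase {L : List ℕ} {z y : ℕ} (hyz : y ≠ z) (h : [z] <:+ L) :
    [z] <:+ L.erase y := by
  obtain ⟨A, rfl⟩ := ends_iff.1 h
  by_cases hy : y ∈ A
  · rw [List.erase_append_left _ hy]; exact ends_iff.2 ⟨A.erase y, rfl⟩
  · rw [List.erase_append_right _ hy, List.erase_cons_tail (by simp [Ne.symm hyz])]
    simpa using ends_iff.2 ⟨A, rfl⟩

lemma ends_erase_rev {L : List ℕ} {p x z : ℕ} (hnd : L.Nodup) (hadj : Adj p x L)
    (hxz : x ≠ z) (hpz : p ≠ z) (h : [z] <:+ L.erase x) : [z] <:+ L := by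
  obtain ⟨C, D, rfl⟩ := adj_iff.1 hadj
  have h' := List.nodup_append.1 hnd
  have hxC : x ∉ C := fun hm => h'.2.2 x hm x (by simp) rfl
  have hxp : p ≠ x := by
    have := h'.2.1; rw [List.nodup_cons] at this; simpa using fun e => this.1 (by simp [e])
  rw [List.erase_append_right _ hxC, List.erase_cons_tail (by simp [hxp]),
    List.erase_cons_head] at h
  obtain ⟨A, hA⟩ := ends_iff.1 h
  rcases D.eq_nil_or_concat with rfl | ⟨D', w, rfl⟩
  · have he : C ++ [p] = A ++ [z] := by simpa using hA
    have := (List.append_inj' he (by simp)).2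
    simp at this
    exact absurd this hpz
  · have he : (C ++ p :: D') ++ [w] = A ++ [z] := by simpa using hA
    have hw := (List.append_inj' he (by simp)).2
    simp at hw
    subst hw
    exact ends_iff.2 ⟨C ++ p :: x :: D', by simp⟩

lemma adj_concat {p q z : ℕ} {A : List ℕ} :
    Adj p q (A ++ [z]) ↔ Adj p q A ∨ (q = z ∧ [p] <:+ A) := by
  constructor
  · rintro h
    obtain ⟨C, D, hCD⟩ := adj_iff.1 h
    rcases D.eq_nil_or_concat with rfl | ⟨D', w, rfl⟩
    · have h' : (C ++ [p]) ++ [q] = A ++ [z] := by simpa using hCD.symm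
      have := List.append_inj' h' (by simp)
      refine Or.inr ⟨by simpa using this.2, ends_iff.2 ⟨C, this.1.symm⟩⟩
    · have h' : (C ++ p :: q :: D') ++ [w] = A ++ [z] := by simpa using hCD.symm
      have := List.append_inj' h' (by simp)
      exact Or.inl (adj_iff.2 ⟨C, D', this.1.symm⟩)
  · rintro (h | ⟨rfl, h⟩)
    · obtain ⟨C, D, rfl⟩ := adj_iff.1 h
      exact adj_iff.2 ⟨C, D ++ [z], by simp⟩
    · obtain ⟨C, rfl⟩ := ends_iff.1 h
      exact adj_iff.2 ⟨C, [], by simp⟩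

open scoped Classical

noncomputable def perms (S : Finset ℕ) : Finset (List ℕ) := S.toList.permutations.toFinset

lemma mem_perms {S : Finset ℕ} {L : List ℕ} : L ∈ perms S ↔ L ~ S.toList := by
  simp [perms, List.mem_permutations]

lemma nodup_of_mem_perms {S : Finset ℕ} {L : List ℕ} (h : L ∈ perms S) : L.Nodup :=
  (mem_perms.1 h).nodup_iff.2 S.nodup_toList

lemma mem_of_mem_perms {S : Finset ℕ} {L : List ℕ} (h : L ∈ perms S) {y : ℕ} :
    y ∈ L ↔ y ∈ S := by
  rw [(mem_perms.1 h).mem_iff, Finset.mem_toList]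

lemma card_perms (S : Finset ℕ) : (perms S).card = Nat.factorial S.card := by
  rw [perms, List.toFinset_card_of_nodup (List.nodup_permutations _ S.nodup_toList),
    List.length_permutations, Finset.length_toList]

lemma perm_cons_erase_toList {S : Finset ℕ} {v : ℕ} (hv : v ∈ S) :
    S.toList ~ v :: (S.erase v).toList := by
  conv_lhs => rw [← Finset.insert_erase hv]
  exact Finset.toList_insert (Finset.notMem_erase v S)

lemma indexOf_split {A B : List ℕ} {v : ℕ} (hv : v ∉ A) :
    List.idxOf v (A ++ v :: B) = A.length := by
  induction A with
  | nil => simp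
  | cons a A ih =>
    simp only [List.mem_cons, not_or] at hv
    rw [List.cons_append, List.idxOf_cons_ne _ (Ne.symm hv.1), ih hv.2]
    rfl

lemma insertIdx_split (A B : List ℕ) (v x : ℕ) :
    (A ++ v :: B).insertIdx (A.length + 1) x = A ++ v :: x :: B := by
  induction A with
  | nil => simp [List.insertIdx_succ_cons]
  | cons a A ih => simpa [List.insertIdx_succ_cons] using ih

lemma erase_split {A B : List ℕ} {v x : ℕ} (hxA : x ∉ A) (hxv : x ≠ v) :
    (A ++ v :: x :: B).erase x = A ++ v :: B := by
  rw [List.erase_append_right _ hxA, List.erase_cons_tail (by simp [Ne.symm hxv]),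
    List.erase_cons_head]

lemma card_insertAfter (T S : Finset ℕ) (v x : ℕ) (hv : v ∈ S) (hx : x ∉ S)
    (hTS : T = insert x S)
    (Q P : List ℕ → Prop) [DecidablePred Q] [DecidablePred P]
    (hQ : ∀ L ∈ perms T, Q L ↔ (Adj v x L ∧ P (L.erase x))) :
    ((perms T).filter Q).card = ((perms S).filter P).card := by
  subst hTS
  have hins : ∀ L, L ~ (insert x S).toList → (L.erase x) ~ S.toList := by
    intro L hL
    have := hL.erase x
    exact this.trans (((Finset.toList_insert hx).erase x).trans (by rw [List.erase_cons_head]))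
  refine Finset.card_bij' (fun L _ => L.erase x)
    (fun M _ => M.insertIdx (M.idxOf v + 1) x) ?hi ?hj ?li ?ri
  case hi =>
    intro L hL
    rw [Finset.mem_filter] at hL ⊢
    exact ⟨mem_perms.2 (hins L (mem_perms.1 hL.1)), ((hQ L hL.1).1 hL.2).2⟩
  case hj =>
    intro M hM
    rw [Finset.mem_filter] at hM ⊢
    have hMp := mem_perms.1 hM.1
    have hMnd : M.Nodup := nodup_of_mem_perms hM.1
    have hvM : v ∈ M := hMp.mem_iff.2 (Finset.mem_toList.2 hv)
    have hxM : x ∉ M := fun hm => hx (Finset.mem_toList.1 (hMp.mem_iff.1 hm))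
    obtain ⟨A, B, rfl⟩ := List.append_of_mem hvM
    have hvA : v ∉ A := (notmem_of_nodup_split hMnd rfl).1
    have hxA : x ∉ A := fun hm => hxM (by simp [hm])
    have hxv : x ≠ v := fun e => hxM (e ▸ hvM)
    rw [indexOf_split hvA, insertIdx_split]
    have hmem : A ++ v :: x :: B ~ (insert x S).toList := by
      have hmid : A ++ v :: x :: B ~ x :: (A ++ v :: B) := by
        simpa using (List.perm_middle (l₁ := A ++ [v]) (a := x) (l₂ := B))
      exact hmid.trans ((hMp.cons x).trans (Finset.toList_insert hx).symm)
    refine ⟨mem_perms.2 hmem, (hQ _ (mem_perms.2 hmem)).2 ⟨adj_iff.2 ⟨A, B, rfl⟩, ?_⟩⟩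
    rw [erase_split hxA hxv]
    exact hM.2
  case li =>
    intro L hL
    rw [Finset.mem_filter] at hL
    have hLnd : L.Nodup := nodup_of_mem_perms hL.1
    obtain ⟨A, B, rfl⟩ := adj_iff.1 ((hQ L hL.1).1 hL.2).1
    have hxsplit := notmem_of_nodup_split hLnd
      (show A ++ v :: x :: B = (A ++ [v]) ++ x :: B by simp)
    have hxA : x ∉ A := fun hm => hxsplit.1 (by simp [hm])
    have hxv : x ≠ v := fun e => hxsplit.1 (by simp [e])
    have hvA : v ∉ A := (notmem_of_nodup_split hLnd rfl).1
    rw [erase_split hxA hxv, indexOf_split hvA, insertIdx_split]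
  case ri =>
    intro M hM
    rw [Finset.mem_filter] at hM
    have hMnd : M.Nodup := nodup_of_mem_perms hM.1
    have hvM : v ∈ M := (mem_perms.1 hM.1).mem_iff.2 (Finset.mem_toList.2 hv)
    have hxM : x ∉ M := fun hm => hx (Finset.mem_toList.1 ((mem_perms.1 hM.1).mem_iff.1 hm))
    obtain ⟨A, B, rfl⟩ := List.append_of_mem hvM
    have hvA : v ∉ A := (notmem_of_nodup_split hMnd rfl).1
    have hxA : x ∉ A := fun hm => hxM (by simp [hm])
    have hxv : x ≠ v := fun e => hxM (e ▸ hvM)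
    rw [indexOf_split hvA, insertIdx_split, erase_split hxA hxv]

lemma card_endsWith (S : Finset ℕ) (v : ℕ) (hv : v ∈ S)
    (Q P : List ℕ → Prop) [DecidablePred Q] [DecidablePred P]
    (hQ : ∀ L ∈ perms S, Q L ↔ ([v] <:+ L ∧ P L.dropLast)) :
    ((perms S).filter Q).card = ((perms (S.erase v)).filter P).card := by
  refine Finset.card_bij' (fun L _ => L.dropLast) (fun M _ => M ++ [v]) ?hi ?hj ?li ?ri
  case hi =>
    intro L hL
    rw [Finset.mem_filter] at hL ⊢
    obtain ⟨hsuf, hP⟩ := (hQ L hL.1).1 hL.2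
    obtain ⟨A, rfl⟩ := ends_iff.1 hsuf
    have hnd : (A ++ [v]).Nodup := nodup_of_mem_perms hL.1
    have hvA : v ∉ A := (notmem_of_nodup_split hnd rfl).1
    have hpA : A ~ (S.erase v).toList := by
      have h1 := (mem_perms.1 hL.1).erase v
      rw [List.erase_append_right _ hvA, List.erase_cons_head, List.append_nil] at h1
      exact h1.trans (((perm_cons_erase_toList hv).erase v).trans (by
        rw [List.erase_cons_head]))
    rw [List.dropLast_concat]
    exact ⟨mem_perms.2 hpA, by simpa [List.dropLast_concat] using hP⟩
  case hj =>
    intro M hM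
    rw [Finset.mem_filter] at hM ⊢
    have hmem : M ++ [v] ~ S.toList := (List.perm_append_singleton v M).trans
      (((mem_perms.1 hM.1).cons v).trans (perm_cons_erase_toList hv).symm)
    exact ⟨mem_perms.2 hmem, (hQ _ (mem_perms.2 hmem)).2
      ⟨⟨M, rfl⟩, by simpa [List.dropLast_concat] using hM.2⟩⟩
  case li =>
    intro L hL
    rw [Finset.mem_filter] at hL
    obtain ⟨A, rfl⟩ := ends_iff.1 ((hQ L hL.1).1 hL.2).1
    rw [List.dropLast_concat]
  case ri =>
    intro M _
    rw [List.dropLast_concat]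

lemma masterA (S : Finset ℕ) (z v₁ x₁ v₂ x₂ : ℕ)
    (hzS : z ∈ S) (hv₁S : v₁ ∈ S) (hx₁S : x₁ ∈ S) (hv₂S : v₂ ∈ S) (hx₂S : x₂ ∈ S)
    (hzv₁ : z ≠ v₁) (hzx₁ : z ≠ x₁) (hzv₂ : z ≠ v₂) (hzx₂ : z ≠ x₂)
    (hv₁x₁ : v₁ ≠ x₁) (hv₁v₂ : v₁ ≠ v₂) (hx₁v₂ : x₁ ≠ v₂) (hx₁x₂ : x₁ ≠ x₂)
    (hv₂x₂ : v₂ ≠ x₂)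
    (Q : List ℕ → Prop) [DecidablePred Q]
    (hQ : ∀ L ∈ perms S, Q L ↔ ([z] <:+ L ∧ Adj v₁ x₁ L ∧ Adj v₂ x₂ L)) :
    ((perms S).filter Q).card = Nat.factorial (S.card - 3) := by
  have hiff1 : ∀ L ∈ perms S, Q L ↔
      (Adj v₁ x₁ L ∧ ((fun M => [z] <:+ M ∧ Adj v₂ x₂ M) (L.erase x₁))) := by
    intro L hL
    have hnd := nodup_of_mem_perms hL
    rw [hQ L hL]
    dsimp only
    constructor
    · rintro ⟨h1, h2, h3⟩
      exact ⟨h2, ends_erase hzx₁.symm h1, erase_adj hx₁v₂ hx₁x₂ h3⟩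
    · rintro ⟨h2, h1, h3⟩
      refine ⟨ends_erase_rev hnd h2 hzx₁.symm hzv₁.symm h1, h2, ?_⟩
      rcases erase_adj_rev hnd hx₁v₂ hx₁x₂ h3 with h | ⟨ha, hb⟩
      · exact h
      · exact absurd (adj_pred_unique hnd ha h2) hv₁v₂.symm
  have hiff2 : ∀ M ∈ perms (S.erase x₁), ((fun M => [z] <:+ M ∧ Adj v₂ x₂ M) M) ↔
      (Adj v₂ x₂ M ∧ ((fun M => [z] <:+ M) (M.erase x₂))) := by
    intro M hM
    have hnd := nodup_of_mem_perms hM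
    dsimp only
    constructor
    · rintro ⟨h1, h2⟩
      exact ⟨h2, ends_erase hzx₂.symm h1⟩
    · rintro ⟨h2, h1⟩
      exact ⟨ends_erase_rev hnd h2 hzx₂.symm hzv₂.symm h1, h2⟩
  have hiff3 : ∀ M ∈ perms ((S.erase x₁).erase x₂), ((fun M => [z] <:+ M) M) ↔
      ([z] <:+ M ∧ (fun _ : List ℕ => True) M.dropLast) := by
    intro M _; simp
  rw [card_insertAfter S (S.erase x₁) v₁ x₁ (Finset.mem_erase.2 ⟨hv₁x₁, hv₁S⟩)
      (Finset.notMem_erase x₁ S) (Finset.insert_erase hx₁S).symm Q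
      (fun M => [z] <:+ M ∧ Adj v₂ x₂ M) hiff1,
    card_insertAfter (S.erase x₁) ((S.erase x₁).erase x₂) v₂ x₂
      (Finset.mem_erase.2 ⟨hv₂x₂, Finset.mem_erase.2 ⟨hx₁v₂.symm, hv₂S⟩⟩)
      (Finset.notMem_erase x₂ _)
      (Finset.insert_erase (Finset.mem_erase.2 ⟨hx₁x₂.symm, hx₂S⟩)).symm
      (fun M => [z] <:+ M ∧ Adj v₂ x₂ M) (fun M => [z] <:+ M) hiff2,
    card_endsWith ((S.erase x₁).erase x₂) z
      (Finset.mem_erase.2 ⟨hzx₂, Finset.mem_erase.2 ⟨hzx₁, hzS⟩⟩)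
      (fun M => [z] <:+ M) (fun _ => True) hiff3]
  rw [Finset.filter_true, card_perms]
  congr 1
  rw [Finset.card_erase_of_mem (Finset.mem_erase.2 ⟨hzx₂, Finset.mem_erase.2 ⟨hzx₁, hzS⟩⟩),
    Finset.card_erase_of_mem (Finset.mem_erase.2 ⟨hx₁x₂.symm, hx₂S⟩),
    Finset.card_erase_of_mem hx₁S]
  omega

lemma masterB (S : Finset ℕ) (z v₁ v₂ x₂ : ℕ)
    (hzS : z ∈ S) (hv₁S : v₁ ∈ S) (hv₂S : v₂ ∈ S) (hx₂S : x₂ ∈ S)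
    (hzv₁ : z ≠ v₁) (hzv₂ : z ≠ v₂) (hzx₂ : z ≠ x₂)
    (hv₁v₂ : v₁ ≠ v₂) (hv₂x₂ : v₂ ≠ x₂)
    (Q : List ℕ → Prop) [DecidablePred Q]
    (hQ : ∀ L ∈ perms S, Q L ↔ ([z] <:+ L ∧ Adj v₁ z L ∧ Adj v₂ x₂ L)) :
    ((perms S).filter Q).card = Nat.factorial (S.card - 3) := by
  have hv₁T : v₁ ∈ S.erase z := Finset.mem_erase.2 ⟨hzv₁.symm, hv₁S⟩
  have hv₂T : v₂ ∈ S.erase z := Finset.mem_erase.2 ⟨hzv₂.symm, hv₂S⟩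
  have hx₂T : x₂ ∈ S.erase z := Finset.mem_erase.2 ⟨hzx₂.symm, hx₂S⟩
  have hiff1 : ∀ L ∈ perms S, Q L ↔
      ([z] <:+ L ∧ ((fun M => [v₁] <:+ M ∧ Adj v₂ x₂ M) L.dropLast)) := by
    intro L hL
    have hnd := nodup_of_mem_perms hL
    rw [hQ L hL]
    dsimp only
    constructor
    · rintro ⟨h1, h2, h3⟩
      obtain ⟨A, rfl⟩ := ends_iff.1 h1
      have hzA : z ∉ A := (notmem_of_nodup_split hnd rfl).1
      rw [List.dropLast_concat]
      refine ⟨h1, ?_, ?_⟩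
      · rcases adj_concat.1 h2 with h | ⟨-, h⟩
        · exact absurd (adj_mem_right h) hzA
        · exact h
      · rcases adj_concat.1 h3 with h | ⟨hx, -⟩
        · exact h
        · exact absurd hx.symm hzx₂
    · rintro ⟨h1, hP⟩
      obtain ⟨A, rfl⟩ := ends_iff.1 h1
      rw [List.dropLast_concat] at hP
      exact ⟨h1, adj_concat.2 (Or.inr ⟨rfl, hP.1⟩), adj_concat.2 (Or.inl hP.2)⟩
  rw [card_endsWith S z hzS Q (fun M => [v₁] <:+ M ∧ Adj v₂ x₂ M) hiff1]
  by_cases hc : x₂ = v₁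
  · subst hc
    have hiff2 : ∀ M ∈ perms (S.erase z), ((fun M => [x₂] <:+ M ∧ Adj v₂ x₂ M) M) ↔
        ([x₂] <:+ M ∧ ((fun M => [v₂] <:+ M) M.dropLast)) := by
      intro M hM
      have hnd := nodup_of_mem_perms hM
      dsimp only
      constructor
      · rintro ⟨h1, h2⟩
        obtain ⟨A, rfl⟩ := ends_iff.1 h1
        have hxA : x₂ ∉ A := (notmem_of_nodup_split hnd rfl).1
        rw [List.dropLast_concat]
        rcases adj_concat.1 h2 with h | ⟨-, h⟩
        · exact absurd (adj_mem_right h) hxA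
        · exact ⟨h1, h⟩
      · rintro ⟨h1, h2⟩
        obtain ⟨A, rfl⟩ := ends_iff.1 h1
        rw [List.dropLast_concat] at h2
        exact ⟨h1, adj_concat.2 (Or.inr ⟨rfl, h2⟩)⟩
    rw [card_endsWith (S.erase z) x₂ hx₂T (fun M => [x₂] <:+ M ∧ Adj v₂ x₂ M)
        (fun M => [v₂] <:+ M) hiff2,
      card_endsWith ((S.erase z).erase x₂) v₂
        (Finset.mem_erase.2 ⟨hv₂x₂, hv₂T⟩) (fun M => [v₂] <:+ M) (fun _ => True)
        (by intro M _; simp)]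
    rw [Finset.filter_true, card_perms]
    congr 1
    rw [Finset.card_erase_of_mem (Finset.mem_erase.2 ⟨hv₂x₂, hv₂T⟩),
      Finset.card_erase_of_mem hx₂T, Finset.card_erase_of_mem hzS]
    omega
  · have hiff2 : ∀ M ∈ perms (S.erase z), ((fun M => [v₁] <:+ M ∧ Adj v₂ x₂ M) M) ↔
        (Adj v₂ x₂ M ∧ ((fun M => [v₁] <:+ M) (M.erase x₂))) := by
      intro M hM
      have hnd := nodup_of_mem_perms hM
      dsimp only
      constructor
      · rintro ⟨h1, h2⟩
        exact ⟨h2, ends_erase hc h1⟩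
      · rintro ⟨h2, h1⟩
        exact ⟨ends_erase_rev hnd h2 hc (Ne.symm hv₁v₂) h1, h2⟩
    rw [card_insertAfter (S.erase z) ((S.erase z).erase x₂) v₂ x₂
        (Finset.mem_erase.2 ⟨hv₂x₂, hv₂T⟩) (Finset.notMem_erase x₂ _)
        (Finset.insert_erase hx₂T).symm
        (fun M => [v₁] <:+ M ∧ Adj v₂ x₂ M) (fun M => [v₁] <:+ M) hiff2,
      card_endsWith ((S.erase z).erase x₂) v₁
        (Finset.mem_erase.2 ⟨fun e => hc e.symm, hv₁T⟩) (fun M => [v₁] <:+ M)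
        (fun _ => True) (by intro M _; simp)]
    rw [Finset.filter_true, card_perms]
    congr 1
    rw [Finset.card_erase_of_mem (Finset.mem_erase.2 ⟨fun e => hc e.symm, hv₁T⟩),
      Finset.card_erase_of_mem hx₂T, Finset.card_erase_of_mem hzS]
    omega

def wordL (n : ℕ) (π : Equiv.Perm (Fin n)) : List ℕ :=
  (List.ofFn fun t : Fin n => ((π t : ℕ) + 1)) ++ [n + 1]

lemma length_wordL (n : ℕ) (π : Equiv.Perm (Fin n)) : (wordL n π).length = n + 1 := by
  simp [wordL]

lemma wordL_getElem (n : ℕ) (π : Equiv.Perm (Fin n)) (t : ℕ) (ht : t < n + 1) :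
    (wordL n π)[t]'(by rw [length_wordL]; exact ht) = pval n π t := by
  rcases lt_or_ge t n with h | h
  · simp only [wordL]
    rw [List.getElem_append_left (by simpa using h)]
    simp [pval, h]
  · have htn : t = n := by omega
    subst htn
    simp only [wordL]
    rw [List.getElem_append_right (by simp)]
    simp [pval]

lemma adj_of_getElem {L : List ℕ} {t : ℕ} (ht : t + 1 < L.length) :
    Adj (L[t]'(by omega)) (L[t+1]'ht) L := by
  refine adj_iff.2 ⟨L.take t, L.drop (t+1+1), ?_⟩
  conv_lhs => rw [← List.take_append_drop t L]
  rw [List.drop_eq_getElem_cons (l := L) (show t < L.length by omega),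
    List.drop_eq_getElem_cons (l := L) ht]

lemma getElem_split0 (A : List ℕ) (p q : ℕ) (B : List ℕ) :
    (A ++ p :: q :: B)[A.length]'(by simp) = p := by
  induction A with
  | nil => rfl
  | cons a A ih => simpa using ih

lemma getElem_split1 (A : List ℕ) (p q : ℕ) (B : List ℕ) :
    (A ++ p :: q :: B)[A.length + 1]'(by simp) = q := by
  induction A with
  | nil => rfl
  | cons a A ih => simpa using ih

lemma cond_iff (n : ℕ) (π : Equiv.Perm (Fin n)) (v : ℕ) (R : ℕ → ℕ → Prop) :
    (∃ t < n, pval n π t = v ∧ R (pval n π t) (pval n π (t+1))) ↔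
      ∃ c, R v c ∧ Adj v c (wordL n π) := by
  constructor
  · rintro ⟨t, ht, hv, hR⟩
    refine ⟨pval n π (t+1), hv ▸ hR, ?_⟩
    have h2 : t + 1 < (wordL n π).length := by rw [length_wordL]; omega
    have hadj := adj_of_getElem h2
    rw [wordL_getElem n π t (by omega), wordL_getElem n π (t+1) (by omega)] at hadj
    rwa [hv] at hadj
  · rintro ⟨c, hR, hadj⟩
    obtain ⟨A, B, hL⟩ := adj_iff.1 hadj
    have hlen : A.length + 2 + B.length = n + 1 := by
      have := congrArg List.length hL
      rw [length_wordL] at this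
      simpa [add_comm, add_assoc, add_left_comm] using this.symm
    have ht : A.length < n := by omega
    have e1 : pval n π A.length = v := by
      rw [← wordL_getElem n π A.length (by omega), List.getElem_of_eq hL, getElem_split0]
    have e2 : pval n π (A.length + 1) = c := by
      rw [← wordL_getElem n π (A.length + 1) (by omega), List.getElem_of_eq hL, getElem_split1]
    exact ⟨A.length, ht, e1, by rw [e1, e2]; exact hR⟩

lemma ascent_iff (n : ℕ) (π : Equiv.Perm (Fin n)) (v : ℕ) :
    IsValAscent n π v ↔ ∃ c, v < c ∧ Adj v c (wordL n π) := by
  have := cond_iff n π v (· < ·)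
  simpa [IsValAscent] using this

lemma descent_iff (n : ℕ) (π : Equiv.Perm (Fin n)) (v : ℕ) :
    IsValDescent n π v ↔ ∃ c, c < v ∧ Adj v c (wordL n π) := by
  have := cond_iff n π v (· > ·)
  simpa [IsValDescent] using this

lemma wordL_nodup (n : ℕ) (π : Equiv.Perm (Fin n)) : (wordL n π).Nodup := by
  rw [wordL, List.nodup_append]
  refine ⟨?_, List.nodup_singleton _, ?_⟩
  · rw [List.nodup_ofFn]
    intro a b hab
    simp only [add_left_inj] at hab
    exact π.injective (Fin.val_injective hab)
  · intro y hy y' hy'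
    simp only [List.mem_ofFn] at hy
    obtain ⟨t, ht⟩ := hy
    have ht' : (π t : ℕ) + 1 = y := ht
    rw [List.mem_singleton] at hy'
    have := (π t).isLt
    omega

lemma wordL_mem_perms (n : ℕ) (π : Equiv.Perm (Fin n)) :
    wordL n π ∈ perms (Finset.Icc 1 (n+1)) := by
  refine mem_perms.2 (List.perm_of_nodup_nodup_toFinset_eq (wordL_nodup n π)
    (Finset.nodup_toList _) ?_)
  ext y
  simp only [List.mem_toFinset, Finset.mem_toList, Finset.mem_Icc, wordL, List.mem_append,
    List.mem_ofFn, List.mem_singleton]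
  constructor
  · rintro (⟨t, rfl⟩ | rfl)
    · have := (π t).isLt
      show 1 ≤ (π t : ℕ) + 1 ∧ (π t : ℕ) + 1 ≤ n + 1
      omega
    · omega
  · rintro ⟨h1, h2⟩
    rcases eq_or_lt_of_le h2 with h | h
    · exact Or.inr h
    · refine Or.inl ⟨π.symm ⟨y - 1, by omega⟩, ?_⟩
      show (π (π.symm ⟨y - 1, by omega⟩) : ℕ) + 1 = y
      rw [Equiv.apply_symm_apply]
      show y - 1 + 1 = y
      omega

lemma wordL_inj {n : ℕ} {π π' : Equiv.Perm (Fin n)} (h : wordL n π = wordL n π') : π = π' := by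
  rw [wordL, wordL] at h
  have h2 := (List.append_inj' h (by simp)).1
  have hf := List.ofFn_injective h2
  ext t
  have := congrFun hf t
  simp only [add_left_inj] at this
  exact this

lemma bridge (n i : ℕ) :
    (Finset.univ.filter
      (fun π : Equiv.Perm (Fin n) => IsValAscent n π i ∧ IsValDescent n π (i + 1))).card
    = ((perms (Finset.Icc 1 (n+1))).filter
        (fun L => [n+1] <:+ L ∧ (∃ b, i < b ∧ Adj i b L) ∧
          (∃ d, d < i + 1 ∧ Adj (i+1) d L))).card := by
  refine Finset.card_bij (fun π _ => wordL n π) ?hi ?inj ?surj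
  case hi =>
    intro π hπ
    rw [Finset.mem_filter] at hπ ⊢
    obtain ⟨-, hasc, hdesc⟩ := hπ
    exact ⟨wordL_mem_perms n π, ⟨_, rfl⟩, (ascent_iff n π i).1 hasc,
      (descent_iff n π (i+1)).1 hdesc⟩
  case inj =>
    intro π _ π' _ h
    exact wordL_inj h
  case surj =>
    intro L hL
    rw [Finset.mem_filter] at hL
    obtain ⟨hLp, hends, hA, hD⟩ := hL
    have hnd := nodup_of_mem_perms hLp
    have hlen : L.length = n + 1 := by
      rw [(mem_perms.1 hLp).length_eq, Finset.length_toList, Nat.card_Icc]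
      omega
    obtain ⟨A, rfl⟩ := ends_iff.1 hends
    have hAlen : A.length = n := by simp at hlen; omega
    have hnA : (n + 1) ∉ A := (notmem_of_nodup_split hnd rfl).1
    have hAnd : A.Nodup := (List.nodup_append.1 hnd).1
    have hbound : ∀ y ∈ A, 1 ≤ y ∧ y ≤ n := by
      intro y hy
      have h1 := (mem_of_mem_perms hLp).1 (by simp [hy] : y ∈ A ++ [n+1])
      rw [Finset.mem_Icc] at h1
      have : y ≠ n + 1 := fun e => hnA (e ▸ hy)
      omega
    have hgetlt : ∀ (t : ℕ) (h : t < A.length), A[t]'h - 1 < n := by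
      intro t h
      have := hbound _ (List.getElem_mem (l := A) (n := t) h)
      omega
    have hfinj : Function.Injective
        (fun t : Fin n =>
          (⟨A[(t : ℕ)]'(t.isLt.trans_le hAlen.ge) - 1, hgetlt _ _⟩ : Fin n)) := by
      intro a b hab
      simp only [Fin.mk.injEq] at hab
      have h1 := hbound _ (List.getElem_mem (l := A) (n := (a : ℕ)) (a.isLt.trans_le hAlen.ge))
      have h2 := hbound _ (List.getElem_mem (l := A) (n := (b : ℕ)) (b.isLt.trans_le hAlen.ge))
      have he : A[(a : ℕ)]'(a.isLt.trans_le hAlen.ge) = A[(b : ℕ)]'(b.isLt.trans_le hAlen.ge) := by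
        omega
      have := (hAnd.getElem_inj_iff).1 he
      exact Fin.val_injective this
    set π : Equiv.Perm (Fin n) :=
      Equiv.ofBijective _ (Finite.injective_iff_bijective.1 hfinj) with hπdef
    have hword : wordL n π = A ++ [n+1] := by
      rw [wordL]
      congr 1
      refine List.ext_getElem (by simp [hAlen]) ?_
      intro t h1 h2
      rw [List.getElem_ofFn]
      show (π ⟨t, by simpa using h1⟩ : ℕ) + 1 = A[t]'h2
      have hπt : (π ⟨t, by simpa using h1⟩ : ℕ) = A[t]'h2 - 1 := rfl
      rw [hπt]
      have := hbound _ (List.getElem_mem (l := A) (n := t) h2)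
      omega
    refine ⟨π, Finset.mem_filter.2 ⟨Finset.mem_univ _, ?_, ?_⟩, hword⟩
    · rw [ascent_iff, hword]
      exact hA
    · rw [descent_iff, hword]
      exact hD

end ValAux

open ValAux

open scoped Classical in
theorem stmt0 (n i : ℕ) (hn : 2 ≤ n) (hi1 : 1 ≤ i) (hi2 : i ≤ n - 1) :
    (Finset.univ.filter
      (fun π : Equiv.Perm (Fin n) => IsValAscent n π i ∧ IsValDescent n π (i + 1))).card
    = (i - 1) * (n - 2).factorial + (n - i) * (n - 2).factorial
      + (n - i) * (i - 1) * (n - 2).factorial := by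
  have hin : i + 1 ≤ n := by omega
  rw [ValAux.bridge n i]
  set S₀ : Finset ℕ := Finset.Icc 1 (n+1) with hS₀
  have hS₀card : S₀.card = n + 1 := by rw [hS₀, Nat.card_Icc]; omega
  have hmemS₀ : ∀ y, 1 ≤ y → y ≤ n + 1 → y ∈ S₀ := by
    intro y h1 h2; rw [hS₀, Finset.mem_Icc]; exact ⟨h1, h2⟩
  set R : Finset (ℕ × ℕ) := ((Finset.Ioc i (n+1)) ×ˢ (Finset.Icc 1 i)).erase (i+1, i) with hR
  have hmemR : ∀ p : ℕ × ℕ, p ∈ R ↔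
      (¬(p.1 = i + 1 ∧ p.2 = i) ∧ (i < p.1 ∧ p.1 ≤ n+1) ∧ (1 ≤ p.2 ∧ p.2 ≤ i)) := by
    intro p
    rw [hR, Finset.mem_erase, Finset.mem_product, Finset.mem_Ioc, Finset.mem_Icc]
    constructor
    · rintro ⟨h1, h2, h3⟩
      exact ⟨fun hh => h1 (Prod.ext hh.1 hh.2), h2, h3⟩
    · rintro ⟨h1, h2, h3⟩
      refine ⟨fun hh => h1 ⟨by rw [hh], by rw [hh]⟩, h2, h3⟩
  have hdecomp : ((perms S₀).filter (fun L => [n+1] <:+ L ∧ (∃ b, i < b ∧ Adj i b L) ∧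
        (∃ d, d < i + 1 ∧ Adj (i+1) d L)))
      = R.biUnion (fun p => (perms S₀).filter
          (fun L => [n+1] <:+ L ∧ Adj i p.1 L ∧ Adj (i+1) p.2 L)) := by
    ext L
    simp only [Finset.mem_filter, Finset.mem_biUnion]
    constructor
    · rintro ⟨hp, hends, ⟨b, hb, hAb⟩, ⟨d, hd, hAd⟩⟩
      have hnd := nodup_of_mem_perms hp
      have hbS : b ∈ S₀ := (mem_of_mem_perms hp).1 (adj_mem_right hAb)
      have hdS : d ∈ S₀ := (mem_of_mem_perms hp).1 (adj_mem_right hAd)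
      rw [hS₀, Finset.mem_Icc] at hbS hdS
      refine ⟨(b, d), (hmemR (b,d)).2 ⟨?_, ⟨hb, hbS.2⟩, ⟨hdS.1, by omega⟩⟩, hp, hends, hAb, hAd⟩
      rintro ⟨he1, he2⟩
      simp only at he1 he2
      subst he1; subst he2
      exact adj_swap_false hnd hAb hAd
    · rintro ⟨p, hpR, hp, hends, h1, h2⟩
      obtain ⟨hne, ⟨hp1a, hp1b⟩, ⟨hp2a, hp2b⟩⟩ := (hmemR p).1 hpR
      exact ⟨hp, hends, ⟨p.1, hp1a, h1⟩, ⟨p.2, by omega, h2⟩⟩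
  rw [hdecomp, Finset.card_biUnion ?hdisj]
  case hdisj =>
    intro p hp q hq hpq
    simp only [Function.onFun]
    rw [Finset.disjoint_left]
    intro L hLp hLq
    rw [Finset.mem_filter] at hLp hLq
    have hnd := nodup_of_mem_perms hLp.1
    apply hpq
    exact Prod.ext (adj_succ_unique hnd hLp.2.2.1 hLq.2.2.1)
      (adj_succ_unique hnd hLp.2.2.2 hLq.2.2.2)
  have hfiber : ∀ p ∈ R, ((perms S₀).filter
      (fun L => [n+1] <:+ L ∧ Adj i p.1 L ∧ Adj (i+1) p.2 L)).card
        = Nat.factorial (n - 2) := by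
    intro p hp
    obtain ⟨hne, ⟨hb1, hb2⟩, ⟨hd1, hd2⟩⟩ := (hmemR p).1 hp
    obtain ⟨b, d⟩ := p
    simp only at hne hb1 hb2 hd1 hd2 ⊢
    have hiS : i ∈ S₀ := hmemS₀ i hi1 (by omega)
    have hi1S : i + 1 ∈ S₀ := hmemS₀ _ (by omega) (by omega)
    have hzS : (n + 1) ∈ S₀ := hmemS₀ _ (by omega) (by omega)
    have hbS : b ∈ S₀ := hmemS₀ _ (by omega) (by omega)
    have hdS : d ∈ S₀ := hmemS₀ _ (by omega) (by omega)
    by_cases hbtop : b = n + 1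
    · subst hbtop
      rw [masterB S₀ (n+1) i (i+1) d hzS hiS hi1S hdS (by omega) (by omega) (by omega)
        (by omega) (by omega) _ (fun L _ => Iff.rfl)]
      rw [hS₀card]
      congr 1
    · by_cases hbi : b = i + 1
      · subst hbi
        have hdne : d ≠ i := fun e => hne ⟨rfl, e⟩
        rw [masterA S₀ (n+1) (i+1) d i (i+1) hzS hi1S hdS hiS hi1S
          (by omega) (by omega) (by omega) (by omega) (by omega) (by omega) (by omega)
          (by omega) (by omega) _ (fun L _ => by tauto)]
        rw [hS₀card]
        congr 1
      · rw [masterA S₀ (n+1) i b (i+1) d hzS hiS hbS hi1S hdS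
          (by omega) (by omega) (by omega) (by omega) (by omega) (by omega) (by omega)
          (by omega) (by omega) _ (fun L _ => Iff.rfl)]
        rw [hS₀card]
        congr 1
  rw [Finset.sum_congr rfl hfiber, Finset.sum_const, smul_eq_mul]
  have hRcard : R.card = (n+1-i) * i - 1 := by
    rw [hR, Finset.card_erase_of_mem (Finset.mem_product.2
      ⟨Finset.mem_Ioc.2 ⟨by omega, by omega⟩, Finset.mem_Icc.2 ⟨hi1, le_refl i⟩⟩),
      Finset.card_product, Nat.card_Ioc, Nat.card_Icc]
    rfl
  rw [hRcard]
  obtain ⟨i', rfl⟩ : ∃ i', i = i' + 1 := ⟨i - 1, by omega⟩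
  obtain ⟨m, rfl⟩ : ∃ m, n = (i' + 1) + m + 1 := ⟨n - i' - 2, by omega⟩
  have e1 : i' + 1 + m + 1 + 1 - (i' + 1) = m + 2 := by omega
  have e2 : i' + 1 + m + 1 - 2 = i' + m := by omega
  have e3 : i' + 1 - 1 = i' := by omega
  have e4 : i' + 1 + m + 1 - (i' + 1) = m + 1 := by omega
  rw [e1, e2, e3, e4]
  have e5 : (m+2) * (i'+1) - 1 = i' + (m+1) + (m+1) * i' := by
    rw [show (m+2) * (i'+1) = i' + (m+1) + (m+1) * i' + 1 from by ring, Nat.add_sub_cancel]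
  rw [e5]
  ring
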